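/- The original ER algorithm satisfies the independence axiom: let H = {H_1,…,H_N} with N ≥ 2, and let m_1^{w_1}, …, m_L^{w_L} be the reliability-discounted assessment BBAs of L assessments with belief degrees β_{n,i} ≥ 0, Σ_n β_{n,i} ≤ 1, and weights w_i ∈ [0,1]. Fix a grade n_0 and suppose β_{n_0,i} = 0 for every i. If at every step of the iterated Dempster combination the conflict is strictly less than 1, then the combined BBA m_1^{w_1} ⊕ ⋯ ⊕ m_L^{w_L} assigns mass 0 to the singleton {H_{n_0}}. -/
import Mathlib


open Finset

/-- A basic belief assignment (BBA) on a finite nonempty frame `Θ`. -/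
def IsBBA {Θ : Type*} [Fintype Θ] [DecidableEq Θ] (m : Finset Θ → ℝ) : Prop :=
  m ∅ = 0 ∧ (∀ A, 0 ≤ m A) ∧ ∑ A : Finset Θ, m A = 1

/-- Shafer's reliability discounting of `m` by the reliability factor `α`. -/
def rdiscount {Θ : Type*} [Fintype Θ] [DecidableEq Θ] (α : ℝ) (m : Finset Θ → ℝ) :
    Finset Θ → ℝ :=
  fun A => if A = Finset.univ then α * m A + (1 - α) else α * m A

/-- The conflict between two mass functions. -/
def conflict {Θ : Type*} [Fintype Θ] [DecidableEq Θ] (m1 m2 : Finset Θ → ℝ) : ℝ :=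
  ∑ B : Finset Θ, ∑ C : Finset Θ, if B ∩ C = ∅ then m1 B * m2 C else 0

/-- Dempster's rule of combination. -/
noncomputable def dempster {Θ : Type*} [Fintype Θ] [DecidableEq Θ] (m1 m2 : Finset Θ → ℝ) :
    Finset Θ → ℝ :=
  fun A => if A = ∅ then 0
    else (∑ B : Finset Θ, ∑ C : Finset Θ, if B ∩ C = A then m1 B * m2 C else 0) /
      (1 - conflict m1 m2)

/-- Iterated Dempster combination of `d 0, …, d i`. -/
noncomputable def combUpTo {Θ : Type*} [Fintype Θ] [DecidableEq Θ] (d : ℕ → Finset Θ → ℝ) :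
    ℕ → Finset Θ → ℝ
  | 0 => d 0
  | i + 1 => dempster (combUpTo d (i)) (d (i + 1))

/-- The assessment BBA on the frame `{H_1,…,H_N}` determined by belief degrees `β`. -/
def assessBBA {N : ℕ} (β : Fin N → ℝ) : Finset (Fin N) → ℝ :=
  fun A => if A = Finset.univ then 1 - ∑ n, β n
    else ∑ n : Fin N, if A = {n} then β n else 0

/-- An importance basic belief assignment (IBBA): `ω` is the mass on the
indecisiveness element `Ω`. -/
def IsIBBA {Θ : Type*} [Fintype Θ] [DecidableEq Θ] (m : Finset Θ → ℝ) (ω : ℝ) : Prop :=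
  m ∅ = 0 ∧ (∀ A, 0 ≤ m A) ∧ 0 ≤ ω ∧ (∑ A : Finset Θ, m A) + ω = 1

/-- Importance discounting of a BBA `m` by the importance factor `β`. -/
def impDiscount {Θ : Type*} [Fintype Θ] [DecidableEq Θ] (β : ℝ) (m : Finset Θ → ℝ) :
    (Finset Θ → ℝ) × ℝ :=
  (fun A => β * m A, 1 - β)

/-- The extended Dempster rule of combination of two IBBAs. -/
noncomputable def edComb {Θ : Type*} [Fintype Θ] [DecidableEq Θ]
    (p q : (Finset Θ → ℝ) × ℝ) : (Finset Θ → ℝ) × ℝ :=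
  (fun A => if A = ∅ then 0
      else (1 - conflict p.1 q.1)⁻¹ *
        ((∑ B : Finset Θ, ∑ C : Finset Θ, if B ∩ C = A then p.1 B * q.1 C else 0) +
          p.1 A * q.2 + p.2 * q.1 A),
    (1 - conflict p.1 q.1)⁻¹ * (p.2 * q.2))

/-- Iterated extended Dempster combination of `d 0, …, d i`. -/
noncomputable def edCombUpTo {Θ : Type*} [Fintype Θ] [DecidableEq Θ] (d : ℕ → (Finset Θ → ℝ) × ℝ) :
    ℕ → (Finset Θ → ℝ) × ℝ
  | 0 => d 0
  | i + 1 => edComb (edCombUpTo d i) (d (i + 1))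

/-- The singleton conflict `Σ_{j≠p} m1({H_j})·m2({H_p})`. -/
def singConflict {N : ℕ} (m1 m2 : Finset (Fin N) → ℝ) : ℝ :=
  ∑ j : Fin N, ∑ p : Fin N, if j ≠ p then m1 {j} * m2 {p} else 0

/-- One recursive aggregation step of the original ER algorithm. -/
noncomputable def erStep {N : ℕ} (s : (Fin N → ℝ) × ℝ) (b : Fin N → ℝ) (h : ℝ) : (Fin N → ℝ) × ℝ :=
  (fun n => (1 - ∑ j : Fin N, ∑ p : Fin N, if p ≠ j then s.1 j * b p else 0)⁻¹ *
      (s.1 n * b n + s.1 n * h + s.2 * b n),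
   (1 - ∑ j : Fin N, ∑ p : Fin N, if p ≠ j then s.1 j * b p else 0)⁻¹ * (s.2 * h))

/-- The recursively defined masses of the original ER algorithm. -/
noncomputable def erSeq {N : ℕ} (b : ℕ → Fin N → ℝ) (h : ℕ → ℝ) : ℕ → (Fin N → ℝ) × ℝ
  | 0 => (b 0, h 0)
  | i + 1 => erStep (erSeq b h i) (b (i + 1)) (h (i + 1))

/-- One recursive aggregation step of the modified ER algorithm, on triples
`(masses on singletons, m̃_H, m̄_H)`. -/
noncomputable def merStep {N : ℕ} (s : (Fin N → ℝ) × ℝ × ℝ) (b : Fin N → ℝ) (tld brd : ℝ) :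
    (Fin N → ℝ) × ℝ × ℝ :=
  (fun n => (1 - ∑ j : Fin N, ∑ p : Fin N, if p ≠ j then s.1 j * b p else 0)⁻¹ *
      (s.1 n * b n + s.1 n * (brd + tld) + (s.2.2 + s.2.1) * b n),
   (1 - ∑ j : Fin N, ∑ p : Fin N, if p ≠ j then s.1 j * b p else 0)⁻¹ *
      (s.2.1 * tld + s.2.1 * brd + s.2.2 * tld),
   (1 - ∑ j : Fin N, ∑ p : Fin N, if p ≠ j then s.1 j * b p else 0)⁻¹ * (s.2.2 * brd))

/-- The recursively defined masses of the modified ER algorithm. -/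
noncomputable def merSeq {N : ℕ} (b : ℕ → Fin N → ℝ) (tld brd : ℕ → ℝ) : ℕ → (Fin N → ℝ) × ℝ × ℝ
  | 0 => (b 0, tld 0, brd 0)
  | i + 1 => merStep (merSeq b tld brd i) (b (i + 1)) (tld (i + 1)) (brd (i + 1))

/-- Reliability-importance discounting: the mass-function part `m^{α,β}`. -/
def riDiscount {Θ : Type*} [Fintype Θ] [DecidableEq Θ] (α β : ℝ) (m : Finset Θ → ℝ) :
    Finset Θ → ℝ :=
  fun A => if A = Finset.univ then α * β * m A + (1 - α) * β else α * β * m A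

lemma dempster_vanish {N : ℕ} (n0 : Fin N) (m1 m2 : Finset (Fin N) → ℝ)
    (h1 : ∀ A : Finset (Fin N), (∀ k, A ≠ {k}) → A ≠ Finset.univ → m1 A = 0)
    (h1' : m1 {n0} = 0)
    (h2 : ∀ A : Finset (Fin N), (∀ k, A ≠ {k}) → A ≠ Finset.univ → m2 A = 0)
    (h2' : m2 {n0} = 0) :
    (∀ A : Finset (Fin N), (∀ k, A ≠ {k}) → A ≠ Finset.univ → dempster m1 m2 A = 0) ∧
      dempster m1 m2 {n0} = 0 := by
  constructor
  · intro A hA1 hA2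
    unfold dempster
    split_ifs with hAe
    · rfl
    · rw [Finset.sum_eq_zero, zero_div]
      intro B _
      apply Finset.sum_eq_zero
      intro C _
      split_ifs with hBC
      · by_cases hB : ∀ k, B ≠ {k}
        · by_cases hBu : B = Finset.univ
          · subst hBu
            have hCA : C = A := by rw [← hBC, Finset.univ_inter]
            rw [hCA, h2 A hA1 hA2, mul_zero]
          · rw [h1 B hB hBu, zero_mul]
        · push_neg at hB
          obtain ⟨k, hk⟩ := hB
          subst hk
          have hsub : A ⊆ {k} := hBC ▸ Finset.inter_subset_left
          rcases Finset.subset_singleton_iff.mp hsub with h | h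
          · exact absurd h hAe
          · exact absurd h (hA1 k)
      · rfl
  · unfold dempster
    rw [if_neg (Finset.singleton_ne_empty n0), Finset.sum_eq_zero, zero_div]
    intro B _
    apply Finset.sum_eq_zero
    intro C _
    split_ifs with hBC
    · by_cases hB : ∀ k, B ≠ {k}
      · by_cases hBu : B = Finset.univ
        · subst hBu
          have hCA : C = {n0} := by rw [← hBC, Finset.univ_inter]
          rw [hCA, h2', mul_zero]
        · rw [h1 B hB hBu, zero_mul]
      · push_neg at hB
        obtain ⟨k, hk⟩ := hB
        subst hk
        have hsub : ({n0} : Finset (Fin N)) ⊆ {k} := hBC ▸ Finset.inter_subset_left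
        rcases Finset.subset_singleton_iff.mp hsub with h | h
        · exact absurd h (Finset.singleton_ne_empty n0)
        · rw [Finset.singleton_inj] at h
          rw [← h, h1', zero_mul]
    · rfl

/-- the original ER algorithm satisfies the independence axiom. -/
theorem originalER_independence (N L : ℕ) (hN : 2 ≤ N) (hL : 1 ≤ L)
    (β : ℕ → Fin N → ℝ) (w : ℕ → ℝ)
    (hβ : ∀ i < L, ∀ n, 0 ≤ β i n) (hβsum : ∀ i < L, ∑ n, β i n ≤ 1)
    (hw : ∀ i < L, 0 ≤ w i ∧ w i ≤ 1)
    (n0 : Fin N) (h0 : ∀ i < L, β i n0 = 0)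
    (d : ℕ → Finset (Fin N) → ℝ)
    (hd : ∀ j, d j = rdiscount (w j) (assessBBA (β j)))
    (hconf : ∀ i, i + 1 < L → conflict (combUpTo d i) (d (i + 1)) < 1) :
    combUpTo d (L - 1) {n0} = 0 := by
  have hsing : ∀ k : Fin N, ({k} : Finset (Fin N)) ≠ Finset.univ := by
    intro k hk
    have := congrArg Finset.card hk
    simp [Finset.card_univ] at this
    omega
  have dprop : ∀ j < L, (∀ A : Finset (Fin N), (∀ k, A ≠ {k}) → A ≠ Finset.univ → d j A = 0) ∧
      d j {n0} = 0 := by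
    intro j hj
    constructor
    · intro A hA1 hA2
      rw [hd]
      unfold rdiscount assessBBA
      rw [if_neg hA2, if_neg hA2, Finset.sum_eq_zero, mul_zero]
      intro n _
      exact if_neg (hA1 n)
    · rw [hd]
      unfold rdiscount assessBBA
      rw [if_neg (hsing n0), if_neg (hsing n0)]
      have : (∑ n : Fin N, if ({n0} : Finset (Fin N)) = {n} then β j n else 0) = β j n0 := by
        simp [Finset.singleton_inj]
      rw [this, h0 j hj, mul_zero]
  have key : ∀ i < L, (∀ A : Finset (Fin N), (∀ k, A ≠ {k}) → A ≠ Finset.univ →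
      combUpTo d i A = 0) ∧ combUpTo d i {n0} = 0 := by
    intro i
    induction i with
    | zero => intro hi; exact dprop 0 hi
    | succ i ih =>
      intro hi
      have h1 := ih (by omega)
      have h2 := dprop (i + 1) hi
      exact dempster_vanish n0 _ _ h1.1 h1.2 h2.1 h2.2
  exact (key (L - 1) (by omega)).2
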